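/- (Theorem 2.3, fourth identity, q-case: joint moments of the q-trinomial distribution of the second kind.) Let n ∈ ℕ, β₁, β₂ ∈ (0,1), and let m₁, m₂ be natural numbers with m₂ ≤ n and m₁ ≤ n − m₂. Then ∑_{x₂=m₂}^{n} ∑_{x₁=0}^{n−x₂} [x₁]_{m₁,q} · [x₂]_{m₂,q} · u(x₁,x₂) / ∏_{i=1}^{m₂} (1 − β₁·q^{n−m₂−x₁+i−1}) = [n]_{m₁+m₂,q} · β₁^{m₁} · β₂^{m₂}. -/

import Mathlib

open Finset

/-- q-integer `[k]_q = (1 - q^k)/(1 - q)`. -/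
noncomputable def qInt (q : ℝ) (k : ℤ) : ℝ := (1 - q ^ k) / (1 - q)

/-- q-factorial `[n]_q! = ∏_{i=1}^n [i]_q`. -/
noncomputable def qFact (q : ℝ) (n : ℕ) : ℝ := ∏ i ∈ Finset.Icc 1 n, qInt q (i : ℤ)

/-- q-binomial coefficient `C_q(n,k)`. -/
noncomputable def qBinom (q : ℝ) (n k : ℕ) : ℝ := qFact q n / (qFact q k * qFact q (n - k))

/-- q-falling factorial `[u]_{m,q} = ∏_{i=1}^m [u-i+1]_q`. -/
noncomputable def qFall (q : ℝ) (u : ℤ) (m : ℕ) : ℝ := ∏ i ∈ Finset.Icc 1 m, qInt q (u - (i : ℤ) + 1)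

/-- `[k]_{q⁻¹} = q^{1-k} · [k]_q`. -/
noncomputable def qIntInv (q : ℝ) (k : ℤ) : ℝ := q ^ (1 - k) * qInt q k

/-- `[u]_{m,q⁻¹} = ∏_{i=1}^m [u-i+1]_{q⁻¹}`. -/
noncomputable def qFallInv (q : ℝ) (u : ℤ) (m : ℕ) : ℝ := ∏ i ∈ Finset.Icc 1 m, qIntInv q (u - (i : ℤ) + 1)

/-- `b(k) = k(k-1)/2`. -/
def bb (k : ℕ) : ℕ := k * (k - 1) / 2

/-- `⟨1 ⊕ α⟩_m = ∏_{i=1}^m (1 + α q^{i-1})`. -/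
noncomputable def oplus (q α : ℝ) (m : ℕ) : ℝ := ∏ i ∈ Finset.Icc 1 m, (1 + α * q ^ (i - 1))

/-- `⟨1 ⊖ β⟩_m = ∏_{i=1}^m (1 - β q^{i-1})`. -/
noncomputable def ominus (q β : ℝ) (m : ℕ) : ℝ := ∏ i ∈ Finset.Icc 1 m, (1 - β * q ^ (i - 1))

/-- q-trinomial coefficient `T_q(n; x₁, x₂)`. -/
noncomputable def qTri (q : ℝ) (n x1 x2 : ℕ) : ℝ :=
  qFact q n / (qFact q x1 * qFact q x2 * qFact q (n - x1 - x2))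

/-- pmf of the q-trinomial distribution of the second kind. -/
noncomputable def upmf (q b1 b2 : ℝ) (n x1 x2 : ℕ) : ℝ :=
  qTri q n x1 x2 * b1 ^ x1 * b2 ^ x2 * ominus q b1 (n - x1) * ominus q b2 (n - x1 - x2)

section lems
variable {q : ℝ} (hq0 : 0 < q) (hq1 : q < 1)

lemma qIntN (n : ℕ) : qInt q (n : ℤ) = (1 - q ^ n) / (1 - q) := by
  simp [qInt, zpow_natCast]

include hq0 hq1 in
lemma qInt_pos {n : ℕ} (hn : 1 ≤ n) : 0 < qInt q (n : ℤ) := by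
  rw [qIntN]
  have h1 : q ^ n < 1 := pow_lt_one₀ hq0.le hq1 (by omega)
  exact div_pos (by linarith) (by linarith)

include hq0 hq1 in
lemma qFact_pos (n : ℕ) : 0 < qFact q n := by
  refine Finset.prod_pos fun i hi => qInt_pos hq0 hq1 (mem_Icc.mp hi).1

include hq0 hq1 in
lemma qFact_ne (n : ℕ) : qFact q n ≠ 0 := (qFact_pos hq0 hq1 n).ne'

lemma qFact_zero : qFact q 0 = 1 := by simp [qFact]

lemma qFact_succ (n : ℕ) : qFact q (n + 1) = qFact q n * qInt q ((n:ℤ) + 1) := by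
  rw [qFact, Finset.prod_Icc_succ_top (by omega)]
  push_cast
  rfl

lemma qInt_add (a b : ℕ) : qInt q ((a + b : ℕ) : ℤ) = qInt q (a : ℤ) + q ^ a * qInt q (b : ℤ) := by
  rcases eq_or_ne q 1 with h | h
  · simp [qInt, h]
  · rw [qIntN, qIntN, qIntN, pow_add]
    have : (1:ℝ) - q ≠ 0 := by intro hc; apply h; linarith
    field_simp
    ring

lemma ominus_zero (β : ℝ) : ominus q β 0 = 1 := by simp [ominus]

lemma ominus_succ (β : ℝ) (m : ℕ) : ominus q β (m + 1) = ominus q β m * (1 - β * q ^ m) := by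
  rw [ominus, Finset.prod_Icc_succ_top (by omega)]
  simp [ominus]

lemma ominus_add (β : ℝ) (a m : ℕ) :
    ominus q β (a + m) = ominus q β a * ∏ i ∈ Icc 1 m, (1 - β * q ^ (a + i - 1)) := by
  induction m with
  | zero => simp
  | succ m ih =>
      rw [← add_assoc, ominus_succ, ih, Finset.prod_Icc_succ_top (by omega : 1 ≤ m + 1)]
      have : a + (m + 1) - 1 = a + m := by omega
      rw [this, mul_assoc]

lemma qFall_zero_of_lt {x m : ℕ} (h : x < m) : qFall q (x : ℤ) m = 0 := by
  apply Finset.prod_eq_zero (i := x + 1) (by simp [mem_Icc]; omega)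
  have : (x:ℤ) - ((x:ℕ) + 1 : ℕ) + 1 = ((0:ℕ):ℤ) := by push_cast; ring
  push_cast
  rw [(by push_cast; ring : (x:ℤ) - ((x:ℤ) + 1) + 1 = ((0:ℕ):ℤ)), qIntN]
  simp

include hq0 hq1 in
lemma qFall_nat (x m : ℕ) (h : m ≤ x) : qFall q (x:ℤ) m = qFact q x / qFact q (x - m) := by
  induction m with
  | zero => simp [qFall, div_self (qFact_ne hq0 hq1 x)]
  | succ m ih =>
    have hm : m ≤ x := by omega
    rw [qFall, Finset.prod_Icc_succ_top (by omega : 1 ≤ m+1),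
      show ((x:ℤ) - (((m+1):ℕ):ℤ) + 1) = ((x - m : ℕ) : ℤ) by push_cast [Nat.cast_sub hm]; ring,
      ← qFall, ih hm]
    have h1 : x - m = (x - (m+1)) + 1 := by omega
    have h2 : qFact q (x-m) = qFact q (x-(m+1)) * qInt q ((x-m : ℕ):ℤ) := by
      rw [h1, qFact_succ]
      norm_num [show ((x-(m+1):ℕ):ℤ)+1 = ((x-m:ℕ):ℤ) by push_cast; omega]
    rw [h2]
    have h3 := (qInt_pos hq0 hq1 (n := x - m) (by omega)).ne'
    have h4 := qFact_ne hq0 hq1 (x - (m+1))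
    rw [Nat.cast_sub hm] at h3 h2
    rw [show x - (m+1) = x - (1+m) by omega] at h2 h4 ⊢
    have h3' := (qInt_pos hq0 hq1 (n := x - m) (by omega)).ne'
    field_simp


include hq0 hq1 in
lemma qBinom_zero (M : ℕ) : qBinom q M 0 = 1 := by
  simp [qBinom, qFact_zero, div_self (qFact_ne hq0 hq1 M)]

include hq0 hq1 in
lemma qBinom_self (M : ℕ) : qBinom q M M = 1 := by
  simp [qBinom, Nat.sub_self, qFact_zero, div_self (qFact_ne hq0 hq1 M)]

include hq0 hq1 in
lemma qBinom_pascal (M k : ℕ) (h : k + 1 ≤ M) :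
    qBinom q (M+1) (k+1) = qBinom q M (k+1) + q^(M-k) * qBinom q M k := by
  have e1 : M + 1 - (k+1) = M - k := by omega
  have hMk : M - (k+1) + 1 = M - k := by omega
  have hq2 : qFact q (M - k) = qFact q (M - (k+1)) * qInt q ((M-k:ℕ):ℤ) := by
    rw [← hMk, qFact_succ, show ((M-(k+1):ℕ):ℤ) + 1 = ((M-(k+1)+1:ℕ):ℤ) by push_cast; ring]
  have hk2 : qFact q (k+1) = qFact q k * qInt q ((k+1:ℕ):ℤ) := by
    rw [qFact_succ, show ((k:ℕ):ℤ) + 1 = ((k+1:ℕ):ℤ) by push_cast; ring]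
  have hM2 : qFact q (M+1) = qFact q M * qInt q ((M+1:ℕ):ℤ) := by
    rw [qFact_succ, show ((M:ℕ):ℤ) + 1 = ((M+1:ℕ):ℤ) by push_cast; ring]
  have hint : qInt q ((M+1 : ℕ):ℤ) = qInt q ((M-k : ℕ):ℤ) + q^(M-k) * qInt q ((k+1 : ℕ):ℤ) := by
    have h2 := qInt_add (q:=q) (M-k) (k+1)
    rw [show (M-k)+(k+1) = M+1 by omega] at h2
    exact h2
  rw [qBinom, qBinom, qBinom, e1, hq2, hk2, hM2, hint]
  have n1 := qFact_ne hq0 hq1 M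
  have n2 := qFact_ne hq0 hq1 k
  have n3 := qFact_ne hq0 hq1 (M-(k+1))
  have n4 := (qInt_pos hq0 hq1 (n:=k+1) (by omega)).ne'
  have n5 := (qInt_pos hq0 hq1 (n:=M-k) (by omega)).ne'
  set a := qFact q M
  set b := qFact q k
  set c := qFact q (M-(k+1))
  set u := qInt q ((k+1:ℕ):ℤ)
  set v := qInt q ((M-k:ℕ):ℤ)
  field_simp

include hq0 hq1 in
lemma keyS (t : ℝ) (M : ℕ) :
    ∑ k ∈ range (M+1), qBinom q M k * t^k * ominus q t (M - k) = 1 := by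
  induction M with
  | zero => simp [qBinom_zero hq0 hq1, ominus_zero]
  | succ M ih =>
    set A : ℕ → ℝ := fun j => qBinom q M j * t^j * ominus q t (M - j) with hA
    set B : ℕ → ℝ := fun j => q^(M-j) * qBinom q M j * t^(j+1) * ominus q t (M - j) with hB
    have hterm : ∀ k ∈ range M, qBinom q (M+1) (k+1) * t^(k+1) * ominus q t (M+1-(k+1))
        = A (k+1) - B (k+1) + B k := by
      intro k hk
      rw [mem_range] at hk
      obtain ⟨d, hd⟩ : ∃ d, d = M - (k+1) := ⟨_, rfl⟩
      have e3 : M + 1 - (k+1) = d + 1 := by omega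
      have e4 : M - k = d + 1 := by omega
      rw [qBinom_pascal hq0 hq1 M k (by omega), e3]
      simp only [hA, hB, ← hd, e4, ominus_succ]
      ring
    rw [Finset.sum_range_succ' _ (M+1), Finset.sum_range_succ, Finset.sum_congr rfl hterm,
        Finset.sum_add_distrib, Finset.sum_sub_distrib]
    have hB1 : ∑ k ∈ range M, B (k+1) = (∑ k ∈ range (M+1), B k) - B 0 := by
      rw [Finset.sum_range_succ' B M]; ring
    have hB2 : ∑ k ∈ range M, B k = (∑ k ∈ range (M+1), B k) - B M := by
      rw [Finset.sum_range_succ B M]; ring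
    have hA1 : ∑ k ∈ range M, A (k+1) = (∑ k ∈ range (M+1), A k) - A 0 := by
      rw [Finset.sum_range_succ' A M]; ring
    have hSA : ∑ k ∈ range (M+1), A k = 1 := ih
    have hf0 : qBinom q (M+1) 0 * t^0 * ominus q t (M+1-0) = A 0 - B 0 := by
      simp only [hA, hB, Nat.sub_zero, qBinom_zero hq0 hq1, ominus_succ]
      ring
    have hfM : qBinom q (M+1) (M+1) * t^(M+1) * ominus q t (M+1-(M+1)) = B M := by
      simp only [hA, hB, Nat.sub_self, qBinom_self hq0 hq1, ominus_zero]
      ring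
    rw [hB1, hB2, hA1, hSA, hf0, hfM]
    ring

lemma tri_swap (N : ℕ) (f : ℕ → ℕ → ℝ) :
    ∑ x2 ∈ range (N+1), ∑ x1 ∈ range (N - x2 + 1), f x1 x2
      = ∑ x1 ∈ range (N+1), ∑ x2 ∈ range (N - x1 + 1), f x1 x2 := by
  rw [Finset.sum_comm' (t' := range (N+1)) (s' := fun x1 => range (N - x1 + 1))]
  intro x y
  simp only [mem_range]
  omega

lemma sum_range_shift (f : ℕ → ℝ) (m K : ℕ) (h0 : ∀ x, x < m → f x = 0) :
    ∑ x ∈ range K, f x = ∑ y ∈ range (K - m), f (y + m) := by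
  rcases le_or_gt K m with h | h
  · rw [show K - m = 0 by omega]
    simp only [range_zero, sum_empty]
    exact Finset.sum_eq_zero fun x hx => h0 x (by rw [mem_range] at hx; omega)
  · obtain ⟨d, rfl⟩ : ∃ d, K = m + d := ⟨K - m, by omega⟩
    rw [Finset.sum_range_add,
        Finset.sum_eq_zero fun x hx => h0 x (by rw [mem_range] at hx; omega), zero_add,
        Nat.add_sub_cancel_left]
    exact Finset.sum_congr rfl fun y _ => by rw [add_comm]

lemma sum_Icc_shift (f : ℕ → ℝ) (a b : ℕ) :
    ∑ x ∈ Icc a b, f x = ∑ y ∈ range (b + 1 - a), f (a + y) := by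
  rw [← Finset.Ico_add_one_right_eq_Icc, Finset.sum_Ico_eq_sum_range]

end lems

theorem stmt13 (q : ℝ) (hq0 : 0 < q) (hq1 : q < 1) (n : ℕ) (β1 β2 : ℝ)
    (hβ1 : 0 < β1) (hβ1' : β1 < 1) (hβ2 : 0 < β2) (hβ2' : β2 < 1)
    (m1 m2 : ℕ) (hm2 : m2 ≤ n) (hm1 : m1 ≤ n - m2) :
    ∑ x2 ∈ Finset.Icc m2 n, ∑ x1 ∈ Finset.range (n - x2 + 1),
      qFall q (x1 : ℤ) m1 * qFall q (x2 : ℤ) m2 * upmf q β1 β2 n x1 x2 /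
        ∏ i ∈ Finset.Icc 1 m2, (1 - β1 * q ^ (n - m2 - x1 + i - 1))
      = qFall q (n : ℤ) (m1 + m2) * β1 ^ m1 * β2 ^ m2 := by
  have hmm : m1 + m2 ≤ n := by omega
  set N := n - m1 - m2 with hN
  set C : ℝ := qFall q (n : ℤ) (m1 + m2) * β1 ^ m1 * β2 ^ m2 with hC
  set G : ℕ → ℕ → ℝ := fun x1 x2 => qFall q (x1:ℤ) m1 * qFall q (x2:ℤ) m2 *
      (qTri q n x1 x2 * β1^x1 * β2^x2 *
        ominus q β1 (n - x1 - m2) * ominus q β2 (n - x1 - x2)) with hG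
  -- Step 1: pointwise remove the denominator
  have step1 : ∀ x2 ∈ Finset.Icc m2 n, ∀ x1 ∈ Finset.range (n - x2 + 1),
      qFall q (x1:ℤ) m1 * qFall q (x2:ℤ) m2 * upmf q β1 β2 n x1 x2 /
        ∏ i ∈ Finset.Icc 1 m2, (1 - β1 * q ^ (n - m2 - x1 + i - 1)) = G x1 x2 := by
    intro x2 hx2 x1 hx1
    rw [Finset.mem_Icc] at hx2; rw [Finset.mem_range] at hx1
    have hsplit : ominus q β1 (n - x1) = ominus q β1 (n - x1 - m2) *
        ∏ i ∈ Finset.Icc 1 m2, (1 - β1 * q ^ (n - m2 - x1 + i - 1)) := by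
      have h2 := ominus_add (q := q) β1 (n - x1 - m2) m2
      rw [show n - x1 - m2 + m2 = n - x1 by omega] at h2
      rw [h2]
      congr 1
      refine Finset.prod_congr rfl fun i hi => ?_
      rw [show n - x1 - m2 + i - 1 = n - m2 - x1 + i - 1 by omega]
    have hD : ∏ i ∈ Finset.Icc 1 m2, (1 - β1 * q ^ (n - m2 - x1 + i - 1)) ≠ 0 := by
      refine ne_of_gt (Finset.prod_pos fun i hi => ?_)
      have h3 : β1 * q ^ (n - m2 - x1 + i - 1) ≤ β1 * 1 :=
        mul_le_mul_of_nonneg_left (pow_le_one₀ hq0.le hq1.le) hβ1.le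
      nlinarith
    rw [upmf, hsplit, hG]
    field_simp
  rw [Finset.sum_congr rfl (fun x2 hx2 => Finset.sum_congr rfl (step1 x2 hx2))]
  -- Step 2: reindex the outer sum
  rw [sum_Icc_shift (fun x2 => ∑ x1 ∈ Finset.range (n - x2 + 1), G x1 x2) m2 n]
  -- Step 3: shift the inner sums
  have step3 : ∀ y2, ∑ x1 ∈ Finset.range (n - (m2 + y2) + 1), G x1 (m2 + y2)
      = ∑ y1 ∈ Finset.range (n - (m2 + y2) + 1 - m1), G (y1 + m1) (m2 + y2) := by
    intro y2
    refine sum_range_shift _ m1 _ fun x hx => ?_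
    rw [hG]
    simp only
    rw [qFall_zero_of_lt hx, zero_mul, zero_mul]
  rw [Finset.sum_congr rfl (fun y2 _ => step3 y2)]
  -- Step 4: truncate the outer sum to range (N+1)
  rw [← Finset.sum_subset (Finset.range_subset_range.mpr (by omega : N + 1 ≤ n + 1 - m2))
      (fun y2 hy2 hny2 => by
        rw [Finset.mem_range] at hy2 hny2
        rw [show n - (m2 + y2) + 1 - m1 = 0 by omega]
        simp)]
  -- Step 5: pointwise identification
  have step5 : ∀ y2 ∈ Finset.range (N + 1),
      ∑ y1 ∈ Finset.range (n - (m2 + y2) + 1 - m1), G (y1 + m1) (m2 + y2)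
      = ∑ y1 ∈ Finset.range (N - y2 + 1),
          C * (qBinom q N y1 * β1 ^ y1 * ominus q β1 (N - y1)) *
            (qBinom q (N - y1) y2 * β2 ^ y2 * ominus q β2 (N - y1 - y2)) := by
    intro y2 hy2
    rw [Finset.mem_range] at hy2
    rw [show n - (m2 + y2) + 1 - m1 = N - y2 + 1 by omega]
    refine Finset.sum_congr rfl fun y1 hy1 => ?_
    rw [Finset.mem_range] at hy1
    rw [hG, hC]
    simp only
    rw [qTri,
        show n - (y1 + m1) - (m2 + y2) = N - y1 - y2 by omega,
        show n - (y1 + m1) - m2 = N - y1 by omega,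
        qFall_nat hq0 hq1 (y1 + m1) m1 (by omega), Nat.add_sub_cancel,
        qFall_nat hq0 hq1 (m2 + y2) m2 (by omega), show m2 + y2 - m2 = y2 by omega,
        qFall_nat hq0 hq1 n (m1 + m2) hmm, show n - (m1 + m2) = N by omega,
        qBinom, qBinom]
    have n1 := qFact_ne hq0 hq1 (y1 + m1)
    have n2 := qFact_ne hq0 hq1 y1
    have n3 := qFact_ne hq0 hq1 (m2 + y2)
    have n4 := qFact_ne hq0 hq1 y2
    have n5 := qFact_ne hq0 hq1 (N - y1 - y2)
    have n6 := qFact_ne hq0 hq1 n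
    have n7 := qFact_ne hq0 hq1 N
    have n8 := qFact_ne hq0 hq1 (N - y1)
    rw [pow_add β1 y1 m1, pow_add β2 m2 y2]
    field_simp
  rw [Finset.sum_congr rfl step5]
  -- Step 6: swap and evaluate via keyS
  rw [tri_swap N (fun y1 y2 => C * (qBinom q N y1 * β1 ^ y1 * ominus q β1 (N - y1)) *
        (qBinom q (N - y1) y2 * β2 ^ y2 * ominus q β2 (N - y1 - y2)))]
  have inner : ∀ y1 ∈ Finset.range (N + 1),
      ∑ y2 ∈ Finset.range (N - y1 + 1),
        C * (qBinom q N y1 * β1 ^ y1 * ominus q β1 (N - y1)) *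
          (qBinom q (N - y1) y2 * β2 ^ y2 * ominus q β2 (N - y1 - y2))
      = C * (qBinom q N y1 * β1 ^ y1 * ominus q β1 (N - y1)) := by
    intro y1 _
    rw [← Finset.mul_sum, keyS hq0 hq1 β2 (N - y1), mul_one]
  rw [Finset.sum_congr rfl inner, ← Finset.mul_sum, keyS hq0 hq1 β1 N, mul_one]
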